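/- Let Δ < 0 be a fundamental discriminant, i.e. Δ is the discriminant of an imaginary quadratic field, and let p be a prime. Then the number of pairs (m,n) ∈ ℤ × ℤ satisfying n² − Δm² = 4p is at most 12. -/

import Mathlib

open scoped Classical

noncomputable section

open NumberField Polynomial

/-- If the totient of `k` is at most 2, then `k` divides 12. -/
lemma aux_totient_dvd_twelve {k : ℕ} (hk : 0 < k) (h : k.totient ≤ 2) : k ∣ 12 := by
  have h12 : (12 : ℕ) ≠ 0 := by norm_num
  rw [← Nat.factorization_le_iff_dvd hk.ne' h12]
  rw [Finsupp.le_iff]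
  intro q hq
  have hqp : q.Prime := Nat.prime_of_mem_primeFactors (by
    rwa [Nat.support_factorization] at hq)
  have hq2 : 2 ≤ q := hqp.two_le
  set e := k.factorization q with he
  have hepos : 0 < e := by
    have := Finsupp.mem_support_iff.mp hq
    omega
  have hdvd : q ^ e ∣ k := Nat.ordProj_dvd k q
  have htot : q ^ (e - 1) * (q - 1) ≤ 2 := by
    rw [← Nat.totient_prime_pow hqp hepos]
    have h1 : (q ^ e).totient ∣ k.totient := Nat.totient_dvd_of_dvd hdvd
    have h2 : 0 < k.totient := Nat.totient_pos.mpr hk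
    exact le_trans (Nat.le_of_dvd h2 h1) h
  have hq3 : q ≤ 3 := by
    by_contra hc
    push_neg at hc
    have h5 : 5 ≤ q := by
      rcases Nat.lt_or_ge q 5 with h5 | h5
      · interval_cases q
        · exact absurd hqp (by norm_num)
      · exact h5
    have hp1 : 1 ≤ q ^ (e - 1) := Nat.one_le_iff_ne_zero.mpr (pow_ne_zero (e-1) hqp.pos.ne')
    have h41 : 4 ≤ q - 1 := by omega
    have : 1 * 4 ≤ q ^ (e - 1) * (q - 1) := Nat.mul_le_mul hp1 h41
    omega
  rw [← Nat.Prime.pow_dvd_iff_le_factorization hqp h12]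
  interval_cases q
  · -- q = 2 : e ≤ 2
    have he2 : e ≤ 2 := by
      by_contra hc
      push_neg at hc
      have h4 : 2 ^ 2 ≤ 2 ^ (e - 1) := Nat.pow_le_pow_right (by norm_num) (by omega)
      omega
    calc (2:ℕ) ^ e ∣ 2 ^ 2 := pow_dvd_pow 2 he2
    _ ∣ 12 := by norm_num
  · have he3 : e ≤ 1 := by
      by_contra hc
      push_neg at hc
      have h4 : 3 ^ 1 ≤ 3 ^ (e - 1) := Nat.pow_le_pow_right (by norm_num) (by omega)
      omega
    calc (3:ℕ) ^ e ∣ 3 ^ 1 := pow_dvd_pow 3 he3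
    _ ∣ 12 := by norm_num

/-- A complex number whose square is a negative real is conjugate-negated. -/
lemma aux_conj_neg {z : ℂ} {r : ℝ} (hz : z ^ 2 = (r : ℂ)) (hr : r < 0) :
    (starRingEnd ℂ) z = -z := by
  have him : (z ^ 2).im = 0 := by rw [hz]; simp
  have hre : (z ^ 2).re = r := by rw [hz]; simp
  simp [pow_two, Complex.mul_im, Complex.mul_re] at him hre
  have hzre : z.re = 0 := by
    rcases mul_eq_zero.mp (by linarith : z.re * z.im = 0) with h | h
    · exact h
    · nlinarith
  apply Complex.ext <;> simp [hzre]

section Emb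

variable {K : Type} [Field K] [NumberField K] {Δ : ℤ} {s : K}

/-- conjugation as a `ℚ`-algebra hom on `ℂ` -/
def conjQ : ℂ →ₐ[ℚ] ℂ := (Complex.conjAe.toAlgHom.restrictScalars ℚ)

lemma aux_norm_eq (hneg : Δ < 0) (hrank : Module.finrank ℚ K = 2)
    (hs : s ^ 2 = (Δ : K)) (σ : K →ₐ[ℚ] ℂ) (x : K) :
    ((Algebra.norm ℚ x : ℚ) : ℂ) = σ x * (starRingEnd ℂ) (σ x) := by
  have hσs : (σ s) ^ 2 = ((Δ : ℝ) : ℂ) := by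
    rw [← map_pow, hs]
    push_cast
    simp
  have hΔR : ((Δ : ℝ)) < 0 := by exact_mod_cast hneg
  have hσs_conj : (starRingEnd ℂ) (σ s) = -(σ s) := aux_conj_neg hσs hΔR
  have hσs_ne : σ s ≠ 0 := by
    intro h0
    rw [h0] at hσs
    simp at hσs
    exact absurd (hσs.symm) (by exact_mod_cast hΔR.ne)
  set τ : K →ₐ[ℚ] ℂ := conjQ.comp σ with hτ
  have hστ : σ ≠ τ := by
    intro hEq
    have h2 : (starRingEnd ℂ) (σ s) = σ s := by
      conv_rhs => rw [hEq]
      rfl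
    rw [hσs_conj] at h2
    exact hσs_ne (by linear_combination (-1/2 : ℂ) * h2)
  have hcard : Fintype.card (K →ₐ[ℚ] ℂ) = 2 := by
    rw [AlgHom.card]; exact hrank
  have huniv : (Finset.univ : Finset (K →ₐ[ℚ] ℂ)) = {σ, τ} := by
    symm
    apply Finset.eq_univ_of_card
    rw [Finset.card_insert_of_notMem (by simpa using hστ), Finset.card_singleton, hcard]
  have hnorm := Algebra.norm_eq_prod_embeddings ℚ ℂ (L := K) x
  rw [huniv, Finset.prod_insert (by simpa using hστ), Finset.prod_singleton] at hnorm
  have h3 : (algebraMap ℚ ℂ) (Algebra.norm ℚ x) = σ x * (starRingEnd ℂ) (σ x) := hnorm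
  rw [← h3]
  norm_num

lemma aux_norm_val (hneg : Δ < 0) (hrank : Module.finrank ℚ K = 2)
    (hs : s ^ 2 = (Δ : K)) (m n : ℤ) :
    Algebra.norm ℚ (((n : K) + (m : K) * s) / 2) = ((n ^ 2 - Δ * m ^ 2 : ℤ) : ℚ) / 4 := by
  have hne : Nonempty (K →ₐ[ℚ] ℂ) := by
    apply Fintype.card_pos_iff.mp
    rw [AlgHom.card, hrank]; norm_num
  obtain ⟨σ⟩ := hne
  have key := aux_norm_eq hneg hrank hs σ (((n : K) + (m : K) * s) / 2)
  have hσs : (σ s) ^ 2 = ((Δ : ℝ) : ℂ) := by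
    rw [← map_pow, hs]; push_cast; simp
  have hΔR : ((Δ : ℝ)) < 0 := by exact_mod_cast hneg
  have hσs_conj : (starRingEnd ℂ) (σ s) = -(σ s) := aux_conj_neg hσs hΔR
  have hσx : σ (((n : K) + (m : K) * s) / 2) = (((n : ℂ) + (m : ℂ) * σ s) / 2) := by
    have hσ2 : σ (2 : K) = 2 := map_ofNat σ 2
    rw [map_div₀, map_add, map_mul, hσ2]
    simp
  have hconj : (starRingEnd ℂ) ((((n : ℂ) + (m : ℂ) * σ s) / 2)) =
      ((n : ℂ) - (m : ℂ) * σ s) / 2 := by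
    rw [map_div₀, map_add, map_mul, hσs_conj, map_ofNat, map_intCast, map_intCast]
    ring
  have hz2 : (σ s) ^ 2 = (Δ : ℂ) := by rw [hσs]; norm_num
  have hC : ((Algebra.norm ℚ (((n : K) + (m : K) * s) / 2) : ℚ) : ℂ)
      = ((n : ℂ) ^ 2 - (Δ : ℂ) * (m : ℂ) ^ 2) / 4 := by
    rw [key, hσx, hconj]
    linear_combination (-(m : ℂ) ^ 2 / 4) * hz2
  have : (((n ^ 2 - Δ * m ^ 2 : ℤ) : ℚ) / 4 : ℂ) = ((n : ℂ) ^ 2 - (Δ : ℂ) * (m : ℂ) ^ 2) / 4 := by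
    push_cast; ring
  rw [← this] at hC
  exact_mod_cast hC

end Emb

section Units

variable {K : Type} [Field K] [NumberField K] {Δ : ℤ} {s : K}

lemma aux_order_le (hneg : Δ < 0) (hrank : Module.finrank ℚ K = 2)
    (hs : s ^ 2 = (Δ : K)) (x : K) (hxi : IsIntegral ℤ x) (hfin : IsOfFinOrder x) :
    orderOf x ∣ 12 ∧ orderOf x ≤ 6 := by
  have hk : 0 < orderOf x := hfin.orderOf_pos
  have hprim : IsPrimitiveRoot x (orderOf x) := IsPrimitiveRoot.orderOf x
  have h1 : (orderOf x).totient ≤ (minpoly ℤ x).natDegree := hprim.totient_le_degree_minpoly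
  have h2 : (minpoly ℤ x).natDegree = (minpoly ℚ x).natDegree := by
    rw [minpoly.isIntegrallyClosed_eq_field_fractions' ℚ hxi,
      (minpoly.monic hxi).natDegree_map]
  have h3 : (minpoly ℚ x).natDegree ≤ 2 := by
    have h4 := minpoly.natDegree_le x (A := ℚ) (B := K)
    rwa [hrank] at h4
  have htot : (orderOf x).totient ≤ 2 := by omega
  have hdvd : orderOf x ∣ 12 := aux_totient_dvd_twelve hk htot
  refine ⟨hdvd, ?_⟩
  have hle : orderOf x ≤ 12 := Nat.le_of_dvd (by norm_num) hdvd
  by_contra hc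
  push_neg at hc
  have hne : orderOf x ≠ 12 := by
    intro h12
    rw [h12] at htot
    have ht12 : Nat.totient 12 = 4 := by decide
    omega
  set k := orderOf x
  interval_cases k <;> revert hdvd hne <;> decide

lemma aux_unit_pow (hneg : Δ < 0) (hrank : Module.finrank ℚ K = 2)
    (hs : s ^ 2 = (Δ : K)) (u : (𝓞 K)ˣ) : u ^ 12 = 1 := by
  set x : K := ((u : 𝓞 K) : K) with hx
  have hxi : IsIntegral ℤ x := RingOfIntegers.isIntegral_coe _
  have habs : |(Algebra.norm ℚ x : ℚ)| = 1 := by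
    have h := NumberField.isUnit_iff_norm.mp u.isUnit
    rwa [RingOfIntegers.coe_norm] at h
  have hall : ∀ φ : K →+* ℂ, ‖φ x‖ = 1 := by
    intro φ
    have key := aux_norm_eq hneg hrank hs (RingHom.equivRatAlgHom K ℂ φ) x
    have hφ : (RingHom.equivRatAlgHom K ℂ φ) x = φ x := rfl
    rw [hφ] at key
    have habs2 := congrArg (fun z : ℂ => ‖z‖) key
    simp only [norm_mul, Complex.norm_conj] at habs2
    have hq : ‖((Algebra.norm ℚ x : ℚ) : ℂ)‖ = 1 := by
      have : ((Algebra.norm ℚ x : ℚ) : ℂ) = (((Algebra.norm ℚ x : ℚ) : ℝ) : ℂ) := by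
        norm_cast
      rw [this, Complex.norm_real, Real.norm_eq_abs]
      rw [show |((Algebra.norm ℚ x : ℚ) : ℝ)| = ((|(Algebra.norm ℚ x : ℚ)| : ℚ) : ℝ) by
        push_cast; ring]
      rw [habs]
      norm_num
    rw [hq] at habs2
    have hnn : (0 : ℝ) ≤ ‖φ x‖ := norm_nonneg _
    have h5 : ‖φ x‖ = ‖φ x‖ := rfl
    rw [h5]
    nlinarith [habs2.symm]
  obtain ⟨n, hn, hxn⟩ := NumberField.Embeddings.pow_eq_one_of_norm_eq_one K ℂ hxi hall
  have hfin : IsOfFinOrder x := isOfFinOrder_iff_pow_eq_one.mpr ⟨n, hn, hxn⟩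
  have h12 : x ^ 12 = 1 := orderOf_dvd_iff_pow_eq_one.mp
    (aux_order_le hneg hrank hs x hxi hfin).1
  apply Units.ext
  apply RingOfIntegers.coe_injective
  rw [Units.val_pow_eq_pow_val, Units.val_one, map_pow, map_one]
  exact h12

lemma aux_units_finite (hneg : Δ < 0) (hrank : Module.finrank ℚ K = 2)
    (hs : s ^ 2 = (Δ : K)) : Finite (𝓞 K)ˣ := by
  have hfin12 : {x : K | x ^ 12 = 1}.Finite := by
    have hne : ((X : K[X]) ^ 12 - C 1) ≠ 0 := X_pow_sub_C_ne_zero (by norm_num) 1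
    apply (Polynomial.finite_setOf_isRoot hne).subset
    intro x hx
    simp only [Set.mem_setOf_eq] at hx ⊢
    simp [Polynomial.IsRoot, hx]
  have : Finite {x : K | x ^ 12 = 1} := hfin12.to_subtype
  apply Finite.of_injective
    (fun u : (𝓞 K)ˣ => (⟨((u : 𝓞 K) : K), by
      have h1 := aux_unit_pow hneg hrank hs u
      show ((u : 𝓞 K) : K) ^ 12 = 1
      rw [← map_pow]
      rw [show ((u : 𝓞 K) ^ 12) = ((u ^ 12 : (𝓞 K)ˣ) : 𝓞 K) by simp]
      rw [h1]
      simp⟩ : {x : K | x ^ 12 = 1}))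
  intro u v huv
  simp only [Subtype.mk.injEq] at huv
  exact Units.ext (RingOfIntegers.coe_injective huv)

lemma aux_units_card (hneg : Δ < 0) (hrank : Module.finrank ℚ K = 2)
    (hs : s ^ 2 = (Δ : K)) : Nat.card (𝓞 K)ˣ ≤ 6 := by
  have : Finite (𝓞 K)ˣ := aux_units_finite hneg hrank hs
  set f : (𝓞 K)ˣ →* K :=
    MonoidHom.comp (algebraMap (𝓞 K) K).toMonoidHom (Units.coeHom (𝓞 K)) with hf
  have hfinj : Function.Injective f := by
    intro a b h
    exact Units.ext (RingOfIntegers.coe_injective h)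
  have hcyc : IsCyclic (𝓞 K)ˣ := isCyclic_of_subgroup_isDomain f hfinj
  obtain ⟨g, hg⟩ := hcyc.exists_generator
  have horder : orderOf g = Nat.card (𝓞 K)ˣ := orderOf_eq_card_of_forall_mem_zpowers hg
  have hmap : orderOf (f g) = orderOf g := orderOf_injective f hfinj g
  have hxi : IsIntegral ℤ (f g) := RingOfIntegers.isIntegral_coe _
  have hfo : IsOfFinOrder (f g) := by
    apply isOfFinOrder_iff_pow_eq_one.mpr
    exact ⟨orderOf g, orderOf_pos g, by rw [← map_pow, pow_orderOf_eq_one, map_one]⟩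
  have h6 := (aux_order_le hneg hrank hs (f g) hxi hfo).2
  rw [hmap, horder] at h6
  exact h6

end Units

/-- For a fundamental discriminant `Δ < 0` (the discriminant of an imaginary quadratic
field) and a prime `p`, the equation `n² − Δm² = 4p` has at most 12 integer
solutions `(m,n)`. -/
theorem norm_form_solutions_le_twelve (Δ : ℤ) (hneg : Δ < 0)
    (K : Type) [Field K] [NumberField K]
    (hrank : Module.finrank ℚ K = 2) (hsq : ∃ α : K, α ^ 2 = (Δ : K))
    (hdisc : NumberField.discr K = Δ)
    (p : ℕ) (hp : p.Prime) :
    Nat.card {mn : ℤ × ℤ // mn.2 ^ 2 - Δ * mn.1 ^ 2 = 4 * (p : ℤ)} ≤ 12 := by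
  obtain ⟨s, hs⟩ := hsq
  set T := {mn : ℤ × ℤ // mn.2 ^ 2 - Δ * mn.1 ^ 2 = 4 * (p : ℤ)} with hTdef
  rcases isEmpty_or_nonempty T with hT | hT
  · rw [Nat.card_of_isEmpty]; norm_num
  -- the element of K attached to a solution
  set a : ℤ × ℤ → K := fun mn => (((mn.2 : K)) + (mn.1 : K) * s) / 2 with ha
  -- the conjugate solution
  have hmemT : ∀ x : T, ((-x.1.1, x.1.2) : ℤ × ℤ).2 ^ 2 - Δ * ((-x.1.1, x.1.2) : ℤ × ℤ).1 ^ 2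
      = 4 * (p : ℤ) := by
    intro x
    have := x.2
    simpa [neg_sq] using this
  set cT : T → T := fun x => ⟨(-x.1.1, x.1.2), hmemT x⟩ with hcT
  -- basic multiplicative identity
  have hmulK : ∀ x : T, a x.1 * a (cT x).1 = (p : K) := by
    intro x
    have hx : ((x.1.2 : K)) ^ 2 - (Δ : K) * (x.1.1 : K) ^ 2 = 4 * (p : K) := by
      exact_mod_cast congrArg (fun z : ℤ => (z : K)) x.2
    show ((x.1.2 : K) + (x.1.1 : K) * s) / 2 * ((((x.1.2 : K)) + ((-x.1.1 : ℤ) : K) * s) / 2)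
        = (p : K)
    push_cast
    linear_combination (1/4 : K) * hx - ((x.1.1 : K) ^ 2 / 4) * hs
  -- conjugate identity : a (cT x) = n - a x
  have hconj : ∀ x : T, a (cT x).1 = ((x.1.2 : K)) - a x.1 := by
    intro x
    show (((x.1.2 : K)) + ((-x.1.1 : ℤ) : K) * s) / 2
        = ((x.1.2 : K)) - ((x.1.2 : K) + (x.1.1 : K) * s) / 2
    push_cast
    ring
  -- integrality
  have hint : ∀ x : T, IsIntegral ℤ (a x.1) := by
    intro x
    refine ⟨X ^ 2 - C x.1.2 * X + C (p : ℤ), ?_, ?_⟩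
    · have h1 : (X ^ 2 - C x.1.2 * X + C (p : ℤ))
          = X ^ 2 + (-(C x.1.2) * X + C (p : ℤ)) := by ring
      rw [h1]
      apply (monic_X_pow 2).add_of_left
      apply lt_of_le_of_lt (b := (1 : WithBot ℕ))
      · compute_degree
      · rw [degree_X_pow]
        exact_mod_cast one_lt_two
    · have h2 := hmulK x
      rw [hconj x] at h2
      simp only [eval₂_add, eval₂_sub, eval₂_mul, eval₂_pow, eval₂_X, eval₂_C]
      simp only [eq_intCast]
      push_cast
      linear_combination -h2
  -- the map into the ring of integers
  set F : T → 𝓞 K := fun x => ⟨a x.1, hint x⟩ with hF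
  have hFcoe : ∀ x : T, ((F x : 𝓞 K) : K) = a x.1 := fun x => rfl
  -- norms
  have hnormF : ∀ x : T, Algebra.norm ℤ (F x) = (p : ℤ) := by
    intro x
    have h1 : (Algebra.norm ℤ (F x) : ℚ) = ((p : ℤ) : ℚ) := by
      rw [Algebra.coe_norm_int, hFcoe x]
      rw [ha]
      rw [aux_norm_val hneg hrank hs x.1.1 x.1.2]
      rw [x.2]
      push_cast
      ring
    exact_mod_cast h1
  -- products in the ring of integers
  have hFmul : ∀ x : T, F x * F (cT x) = ((p : ℕ) : 𝓞 K) := by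
    intro x
    apply RingOfIntegers.coe_injective
    show ((F x * F (cT x) : 𝓞 K) : K) = _
    rw [show ((F x * F (cT x) : 𝓞 K) : K) = a x.1 * a (cT x).1 from rfl]
    rw [hmulK x]
    simp
  -- injectivity of F
  have hFinj : Function.Injective F := by
    intro x y hxy
    have h1 : a x.1 = a y.1 := by
      rw [← hFcoe x, ← hFcoe y, hxy]
    have h2 : ((x.1.2 : K)) + (x.1.1 : K) * s = ((y.1.2 : K)) + (y.1.1 : K) * s := by
      have := h1
      rw [ha] at this
      field_simp at this
      linear_combination this
    have hm : x.1.1 = y.1.1 := by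
      by_contra hm
      have h3 : ((x.1.2 - y.1.2 : ℤ) : K) = ((y.1.1 - x.1.1 : ℤ) : K) * s := by
        push_cast
        linear_combination h2
      have h4 : (((x.1.2 - y.1.2) ^ 2 : ℤ) : K) = (((y.1.1 - x.1.1) ^ 2 * Δ : ℤ) : K) := by
        push_cast
        push_cast at h3
        linear_combination (((x.1.2 : K) - y.1.2) + ((y.1.1 : K) - x.1.1) * s) * h3
          + (((y.1.1 : K) - x.1.1) ^ 2) * hs
      have h5 : (x.1.2 - y.1.2) ^ 2 = (y.1.1 - x.1.1) ^ 2 * Δ := by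
        exact_mod_cast h4
      have h6 : (y.1.1 - x.1.1) ^ 2 > 0 :=
        pow_two_pos_of_ne_zero (sub_ne_zero.mpr (Ne.symm hm))

      nlinarith [sq_nonneg (x.1.2 - y.1.2), h6]
    have hn : x.1.2 = y.1.2 := by
      have h3 : ((x.1.2 : K)) = ((y.1.2 : K)) := by
        rw [hm] at h2
        linear_combination h2
      exact_mod_cast h3
    apply Subtype.ext
    apply Prod.ext hm hn
  -- pick a base solution
  obtain ⟨y⟩ := hT
  -- F y is a prime element
  have hFy0 : ∀ x : T, F x ≠ 0 := by
    intro x h0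
    have := hnormF x
    rw [h0, Algebra.norm_zero] at this
    have hp0 : (p : ℤ) ≠ 0 := by exact_mod_cast hp.ne_zero
    exact hp0 this.symm
  have hFyprime : Prime (F y) := by
    apply Ideal.prime_of_irreducible_absNorm_span (hFy0 y)
    rw [Ideal.absNorm_span_singleton, hnormF y]
    rw [Int.natAbs_natCast]
    exact hp.prime.irreducible
  -- norm-one elements are units
  have hunit : ∀ γ : 𝓞 K, Algebra.norm ℤ γ = 1 → IsUnit γ := by
    intro γ hγ
    apply NumberField.isUnit_iff_norm.mpr
    rw [RingOfIntegers.coe_norm, ← Algebra.coe_norm_int, hγ]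
    norm_num
  -- the dichotomy
  have hkey : ∀ x : T, ∃ u : (𝓞 K)ˣ, F x = F y * u ∨ F x = F (cT y) * u := by
    intro x
    have hdvd : F y ∣ F x * F (cT x) := by
      rw [hFmul x, ← hFmul y]
      exact dvd_mul_right _ _
    rcases hFyprime.2.2 _ _ hdvd with h | h
    · obtain ⟨γ, hγ⟩ := h
      have hnγ : Algebra.norm ℤ γ = 1 := by
        have h1 := congrArg (Algebra.norm ℤ) hγ
        rw [map_mul, hnormF x, hnormF y] at h1
        have hp0 : (p : ℤ) ≠ 0 := by exact_mod_cast hp.ne_zero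
        exact mul_left_cancel₀ hp0 (by rw [mul_one]; exact h1.symm)
      obtain ⟨u, hu⟩ := hunit γ hnγ
      exact ⟨u, Or.inl (by rw [hγ, hu])⟩
    · obtain ⟨γ, hγ⟩ := h
      have hnγ : Algebra.norm ℤ γ = 1 := by
        have h1 := congrArg (Algebra.norm ℤ) hγ
        rw [map_mul, hnormF (cT x), hnormF y] at h1
        have hp0 : (p : ℤ) ≠ 0 := by exact_mod_cast hp.ne_zero
        exact mul_left_cancel₀ hp0 (by rw [mul_one]; exact h1.symm)
      obtain ⟨u, hu⟩ := hunit γ hnγ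
      have hcancel : F x * γ = F (cT y) := by
        have h1 : F y * (F x * γ) = F y * F (cT y) := by
          rw [hFmul y]
          rw [show F y * (F x * γ) = F x * (F y * γ) by ring, ← hγ, hFmul x]
        exact mul_left_cancel₀ (hFy0 y) h1
      refine ⟨u⁻¹, Or.inr ?_⟩
      rw [← hcancel, ← hu, mul_assoc]
      simp
  -- finiteness and counting
  have hfinU : Finite (𝓞 K)ˣ := aux_units_finite hneg hrank hs
  have hcardU : Nat.card (𝓞 K)ˣ ≤ 6 := aux_units_card hneg hrank hs
  have hchoice : ∀ x : T, F x = F y * (Classical.choose (hkey x))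
      ∨ F x = F (cT y) * (Classical.choose (hkey x)) :=
    fun x => Classical.choose_spec (hkey x)
  have key2 : Nat.card T ≤ Nat.card ((𝓞 K)ˣ × Bool) := by
    apply Nat.card_le_card_of_injective
      (f := fun x : T => ((Classical.choose (hkey x),
        decide (F x = F y * (Classical.choose (hkey x)))) : (𝓞 K)ˣ × Bool))
    intro x1 x2 h12
    have hu : Classical.choose (hkey x1) = Classical.choose (hkey x2) :=
      congrArg Prod.fst h12
    have hb : decide (F x1 = F y * (Classical.choose (hkey x1)))
        = decide (F x2 = F y * (Classical.choose (hkey x2))) :=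
      congrArg Prod.snd h12
    by_cases hc1 : F x1 = F y * Classical.choose (hkey x1)
    · have hc2 : F x2 = F y * Classical.choose (hkey x2) := by
        apply of_decide_eq_true
        rw [← hb]
        exact decide_eq_true hc1
      exact hFinj (by rw [hc1, hc2, hu])
    · have hc2 : ¬(F x2 = F y * Classical.choose (hkey x2)) := by
        intro hc2
        apply hc1
        apply of_decide_eq_true
        rw [hb]
        exact decide_eq_true hc2
      have h1 := (hchoice x1).resolve_left hc1
      have h2 := (hchoice x2).resolve_left hc2
      exact hFinj (by rw [h1, h2, hu])
  have hcard2 : Nat.card ((𝓞 K)ˣ × Bool) = Nat.card (𝓞 K)ˣ * 2 := by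
    rw [Nat.card_prod]
    simp
  omega

end
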